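/- Let G be a finitely generated group and μ a symmetric probability measure on G whose support is finite, generates G, and contains the identity. Let μ^{*n} denote the n-fold convolution power of μ, i.e., the distribution of the product X₁⋯Xₙ of n independent random elements each with law μ. If liminf_{n→∞} μ^{*n}({g ∈ G : g² = 1}) > (√5 − 1)/2, then G is virtually abelian. -/

import Mathlib

/-- Convolution powers of a finitely supported measure `μ` on a group `G`:
`convPow μ 1 = μ` and `convPow μ (n+1) (x) = Σ_g μ(g) · (convPow μ n)(g⁻¹x)`
(with `convPow μ 0` the Dirac mass at the identity). -/
noncomputable def convPow {G : Type*} [Group G] (μ : G →₀ ℝ) : ℕ → (G →₀ ℝ)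
  | 0 => Finsupp.single 1 1
  | n + 1 => μ.sum fun g c => c • (convPow μ n).mapDomain (fun h => g * h)

/-- The mass a finitely supported measure `ν` gives to a set `A ⊆ G`. -/
noncomputable def measOf {G : Type*} (ν : G →₀ ℝ) (A : Set G) : ℝ :=
  ν.sum fun g c => A.indicator (fun _ => c) g

namespace VA
variable {G : Type*} [Group G]

def ma (μ : G →₀ ℝ) : MonoidAlgebra ℝ G := MonoidAlgebra.ofCoeff μ

instance : CoeFun (MonoidAlgebra ℝ G) (fun _ => G → ℝ) := ⟨fun x => x.coeff⟩

instance : Coe (MonoidAlgebra ℝ G) (G →₀ ℝ) := ⟨MonoidAlgebra.coeff⟩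

lemma ma_apply (μ : G →₀ ℝ) (x : G) : ma μ x = μ x := rfl

open scoped Classical

/-- total mass -/
noncomputable def mass {α : Type*} (ν : α →₀ ℝ) : ℝ := ν.sum fun _ c => c

lemma mass_eq_sum_superset {α : Type*} (ν : α →₀ ℝ) {s : Finset α} (hs : ν.support ⊆ s) :
    mass ν = ∑ g ∈ s, ν g := by
  rw [mass, Finsupp.sum, Finset.sum_subset hs]
  intro c _ hc
  exact Finsupp.notMem_support_iff.mp hc

lemma measOf_eq_sum_superset (ν : G →₀ ℝ) (A : Set G) {s : Finset G} (hs : ν.support ⊆ s) :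
    measOf ν A = ∑ g ∈ s, if g ∈ A then ν g else 0 := by
  rw [measOf, Finsupp.sum]
  rw [Finset.sum_subset hs]
  · refine Finset.sum_congr rfl fun g _ => ?_
    rw [Set.indicator_apply]
  · intro g _ hg
    have : ν g = 0 := Finsupp.notMem_support_iff.mp hg
    rw [this]; simp

lemma measOf_eq_sum (ν : G →₀ ℝ) (A : Set G) :
    measOf ν A = ∑ g ∈ ν.support, if g ∈ A then ν g else 0 :=
  measOf_eq_sum_superset ν A (subset_refl _)

lemma measOf_nonneg {ν : G →₀ ℝ} (h : ∀ g, 0 ≤ ν g) (A : Set G) : 0 ≤ measOf ν A := by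
  rw [measOf_eq_sum]
  refine Finset.sum_nonneg fun g _ => ?_
  split <;> simp [h g]

lemma measOf_le_mass {ν : G →₀ ℝ} (h : ∀ g, 0 ≤ ν g) (A : Set G) : measOf ν A ≤ mass ν := by
  rw [measOf_eq_sum, mass, Finsupp.sum]
  refine Finset.sum_le_sum fun g _ => ?_
  split <;> simp [h g]

lemma measOf_mono {ν : G →₀ ℝ} (h : ∀ g, 0 ≤ ν g) {A B : Set G} (hAB : A ⊆ B) :
    measOf ν A ≤ measOf ν B := by
  rw [measOf_eq_sum, measOf_eq_sum]
  refine Finset.sum_le_sum fun g _ => ?_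
  by_cases hA : g ∈ A
  · rw [if_pos hA, if_pos (hAB hA)]
  · rw [if_neg hA]; split <;> simp [h g]

lemma mass_single_one : mass (Finsupp.single (1:G) (1:ℝ)) = 1 := by
  rw [mass, Finsupp.sum_single_index]; rfl

noncomputable def massHom {α : Type*} : (α →₀ ℝ) →+ ℝ :=
  Finsupp.liftAddHom (fun _ => AddMonoidHom.id ℝ)

lemma massHom_eq {α : Type*} (ν : α →₀ ℝ) : massHom ν = mass ν := by
  rw [massHom, Finsupp.liftAddHom_apply]; rfl

lemma mass_mul (f g : G →₀ ℝ) : mass (ma f * ma g).coeff = mass f * mass g := by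
  rw [← massHom_eq, MonoidAlgebra.mul_def]
  rw [show (Finsupp.sum (ma f).coeff fun a b => Finsupp.sum (ma g).coeff fun a2 b2 => MonoidAlgebra.single (a*a2) (b*b2)).coeff = ∑ a ∈ f.support, ∑ b ∈ g.support, Finsupp.single (a*b) (f a * g b) from by simp only [MonoidAlgebra.coeff_finsuppSum, MonoidAlgebra.coeff_single]; rfl, map_sum]
  have : ∀ a ∈ f.support, massHom (∑ b ∈ g.support, Finsupp.single (a*b) (f a * g b)) = f a * mass g := by
    intro a _
    rw [map_sum]
    have : ∀ b ∈ g.support, massHom (Finsupp.single (a*b) (f a * g b)) = f a * g b := by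
      intro b _
      rw [massHom, Finsupp.liftAddHom_apply_single]; rfl
    rw [Finset.sum_congr rfl this, ← Finset.mul_sum]
    rfl
  rw [Finset.sum_congr rfl this, ← Finset.sum_mul]
  rfl

lemma mul_nonneg_apply {f g : G →₀ ℝ} (hf : ∀ x, 0 ≤ f x) (hg : ∀ x, 0 ≤ g x) (x : G) :
    0 ≤ (ma f * ma g) x := by
  rw [MonoidAlgebra.mul_apply, Finsupp.sum]
  refine Finset.sum_nonneg fun a _ => ?_
  rw [Finsupp.sum]
  refine Finset.sum_nonneg fun b _ => ?_
  split
  · exact mul_nonneg (hf a) (hg b)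
  · exact le_refl 0

lemma convPow_succ (μ : G →₀ ℝ) (n : ℕ) :
    ma (convPow μ (n+1)) = ma μ * ma (convPow μ n) := by
  rw [MonoidAlgebra.mul_def]
  apply MonoidAlgebra.coeff_injective
  simp only [MonoidAlgebra.coeff_finsuppSum]
  show (μ.sum fun g c => c • (convPow μ n).mapDomain (fun h => g * h)) = _
  refine Finsupp.sum_congr (fun g _ => ?_)
  rw [Finsupp.mapDomain, Finsupp.smul_sum]
  refine Finsupp.sum_congr (fun h _ => ?_)
  rw [Finsupp.smul_single]
  rfl

lemma convPow_eq_pow (μ : G →₀ ℝ) (n : ℕ) :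
    ma (convPow μ n) = (ma μ) ^ n := by
  induction n with
  | zero =>
      rw [pow_zero]
      show MonoidAlgebra.ofCoeff (Finsupp.single 1 1) = _
      rfl
  | succ n ih => rw [convPow_succ, ih, pow_succ']

lemma convPow_add (μ : G →₀ ℝ) (m n : ℕ) :
    ma (convPow μ (m + n)) = ma (convPow μ m) * ma (convPow μ n) := by
  rw [convPow_eq_pow, convPow_eq_pow, convPow_eq_pow, pow_add]

end VA

namespace VA
variable {G : Type*} [Group G]
open scoped Classical Pointwise

lemma support_inv_mem {f : G →₀ ℝ} (hf : ∀ a : G, f a⁻¹ = f a) {a : G}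
    (ha : a ∈ f.support) : a⁻¹ ∈ f.support := by
  rw [Finsupp.mem_support_iff] at *; rw [hf]; exact ha

lemma mul_apply_inv_symm (f g : G →₀ ℝ) (hf : ∀ a : G, f a⁻¹ = f a)
    (hg : ∀ a : G, g a⁻¹ = g a) (x : G) :
    (ma f * ma g) x⁻¹ = (ma g * ma f) x := by
  rw [MonoidAlgebra.mul_apply, MonoidAlgebra.mul_apply]
  show (∑ a ∈ f.support, ∑ b ∈ g.support, if a * b = x⁻¹ then f a * g b else 0)
      = ∑ b ∈ g.support, ∑ a ∈ f.support, if b * a = x then g b * f a else 0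
  rw [Finset.sum_comm]
  refine Finset.sum_nbij' (fun b => b⁻¹) (fun b => b⁻¹)
    (fun b hb => support_inv_mem hg hb) (fun b hb => support_inv_mem hg hb)
    (fun b _ => inv_inv b) (fun b _ => inv_inv b) (fun b hb => ?_)
  refine Finset.sum_nbij' (fun a => a⁻¹) (fun a => a⁻¹)
    (fun a ha => support_inv_mem hf ha) (fun a ha => support_inv_mem hf ha)
    (fun a _ => inv_inv a) (fun a _ => inv_inv a) (fun a ha => ?_)
  refine if_congr ?_ ?_ rfl
  · rw [← mul_inv_rev]
    exact inv_eq_iff_eq_inv.symm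
  · rw [hg, hf, mul_comm]

lemma convPow_symm (μ : G →₀ ℝ) (hsym : ∀ g : G, μ g⁻¹ = μ g) :
    ∀ n (x : G), convPow μ n x⁻¹ = convPow μ n x := by
  intro n
  induction n with
  | zero =>
      intro x
      show (Finsupp.single (1:G) (1:ℝ)) x⁻¹ = (Finsupp.single (1:G) (1:ℝ)) x
      by_cases hx : x = 1 <;> simp [hx, Finsupp.single_apply, eq_comm, inv_eq_one]
  | succ n ih =>
      intro x
      have e1 : ma (convPow μ (n+1)) = ma μ * ma (convPow μ n) := convPow_succ μ n
      have e2 : ma (convPow μ (n+1)) = ma (convPow μ n) * ma μ := by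
        rw [convPow_eq_pow, convPow_eq_pow, pow_succ]
      have h1 : convPow μ (n+1) x⁻¹ = (ma μ * ma (convPow μ n)) x⁻¹ := by rw [← e1]; rfl
      have h2 : convPow μ (n+1) x = (ma (convPow μ n) * ma μ) x := by rw [← e2]; rfl
      rw [h1, h2]
      exact mul_apply_inv_symm μ (convPow μ n) hsym ih x

lemma measOf_mul (f g : G →₀ ℝ) (A : Set G) :
    measOf (ma f * ma g) A
      = ∑ a ∈ f.support, ∑ b ∈ g.support, (if a*b ∈ A then f a * g b else 0) := by
  have hsupp : (ma f * ma g).coeff.support ⊆ f.support * g.support :=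
    MonoidAlgebra.support_coeff_mul_subset (ma f) (ma g)
  rw [measOf_eq_sum_superset _ A hsupp]
  have happ : ∀ z : G, (ma f * ma g) z = ∑ a ∈ f.support, ∑ b ∈ g.support,
      (if a * b = z then f a * g b else 0) := by
    intro z; rw [MonoidAlgebra.mul_apply]; rfl
  calc ∑ z ∈ f.support * g.support, (if z ∈ A then (ma f * ma g) z else 0)
      = ∑ z ∈ f.support * g.support, ∑ a ∈ f.support, ∑ b ∈ g.support,
          (if a * b = z then (if z ∈ A then f a * g b else 0) else 0) := by
        refine Finset.sum_congr rfl fun z _ => ?_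
        by_cases hz : z ∈ A
        · rw [if_pos hz, happ]
          refine Finset.sum_congr rfl fun a _ => Finset.sum_congr rfl fun b _ => ?_
          rw [if_pos hz]
        · rw [if_neg hz]
          symm
          refine Finset.sum_eq_zero fun a _ => Finset.sum_eq_zero fun b _ => ?_
          rw [if_neg hz]
          exact ite_self 0
    _ = ∑ a ∈ f.support, ∑ b ∈ g.support, ∑ z ∈ f.support * g.support,
          (if a * b = z then (if z ∈ A then f a * g b else 0) else 0) := by
        rw [Finset.sum_comm]
        refine Finset.sum_congr rfl fun a _ => Finset.sum_comm
    _ = ∑ a ∈ f.support, ∑ b ∈ g.support, (if a*b ∈ A then f a * g b else 0) := by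
        refine Finset.sum_congr rfl fun a ha => Finset.sum_congr rfl fun b hb => ?_
        have hmem : a * b ∈ f.support * g.support := Finset.mul_mem_mul ha hb
        rw [Finset.sum_ite_eq (f.support * g.support) (a*b)
          (fun z => if z ∈ A then f a * g b else 0), if_pos hmem]

end VA

namespace VA
variable {G : Type*} [Group G]
open scoped Classical Pointwise

section Quotient

/-- pushforward of the random walk to the left coset space -/
noncomputable def rho (μ : G →₀ ℝ) (H : Subgroup G) (n : ℕ) : (G ⧸ H) →₀ ℝ :=
  Finsupp.mapDomain QuotientGroup.mk (convPow μ n)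

/-- one step of the quotient walk -/
noncomputable def Qop (μ : G →₀ ℝ) {H : Subgroup G} (f : (G ⧸ H) →₀ ℝ) : (G ⧸ H) →₀ ℝ :=
  μ.sum fun g c => c • f.mapDomain (fun x => g • x)

/-- inner product of finitely supported functions -/
noncomputable def dot {H : Subgroup G} (f h : (G ⧸ H) →₀ ℝ) : ℝ := ∑ c ∈ f.support, f c * h c

variable {μ : G →₀ ℝ} {H : Subgroup G}

lemma dot_eq_superset {f : (G ⧸ H) →₀ ℝ} (h : (G ⧸ H) →₀ ℝ) {s : Finset (G ⧸ H)}
    (hs : f.support ⊆ s) : dot f h = ∑ c ∈ s, f c * h c := by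
  rw [dot, Finset.sum_subset hs]
  intro c _ hc
  rw [Finsupp.notMem_support_iff.mp hc, zero_mul]

lemma mapDomain_apply' {H : Subgroup G} (f : G →₀ ℝ) (π : G → G ⧸ H) (c : G ⧸ H) :
    Finsupp.mapDomain π f c = ∑ x ∈ f.support, (if π x = c then f x else 0) := by
  rw [Finsupp.mapDomain, Finsupp.sum_apply, Finsupp.sum]
  refine Finset.sum_congr rfl fun x _ => ?_
  rw [Finsupp.single_apply]

lemma rho_succ (n : ℕ) : rho μ H (n+1) = Qop μ (rho μ H n) := by
  show Finsupp.mapDomain _ (μ.sum fun g c => c • (convPow μ n).mapDomain (fun h => g * h)) = _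
  rw [Finsupp.sum,
    show (Finsupp.mapDomain QuotientGroup.mk :  (G →₀ ℝ) → ((G ⧸ H) →₀ ℝ))
      = (Finsupp.mapDomain.addMonoidHom QuotientGroup.mk : (G →₀ ℝ) →+ ((G ⧸ H) →₀ ℝ)) from rfl,
    map_sum (Finsupp.mapDomain.addMonoidHom QuotientGroup.mk)]
  rw [Qop, Finsupp.sum]
  refine Finset.sum_congr rfl fun g _ => ?_
  rw [Finsupp.mapDomain.addMonoidHom_apply, Finsupp.mapDomain_smul]
  rw [rho]
  rw [← Finsupp.mapDomain_comp (v := convPow μ n) (f := (QuotientGroup.mk : G → G ⧸ H))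
    (g := fun x => g • x),
    ← Finsupp.mapDomain_comp (v := convPow μ n) (f := fun h => g * h)
    (g := (QuotientGroup.mk : G → G ⧸ H))]
  rfl

lemma rho_nonneg (hpos : ∀ g : G, 0 ≤ μ g) (hp : ∀ n (x : G), 0 ≤ convPow μ n x) (n : ℕ)
    (c : G ⧸ H) : 0 ≤ rho μ H n c := by
  rw [rho, mapDomain_apply']
  refine Finset.sum_nonneg fun x _ => ?_
  split
  · exact hp n x
  · exact le_refl 0

end Quotient
end VA

namespace VA
variable {G : Type*} [Group G]
open scoped Classical Pointwise

lemma convPow_nonneg {μ : G →₀ ℝ} (hpos : ∀ g : G, 0 ≤ μ g) :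
    ∀ n (x : G), 0 ≤ convPow μ n x := by
  intro n
  induction n with
  | zero =>
      intro x
      show 0 ≤ (Finsupp.single (1:G) (1:ℝ)) x
      rw [Finsupp.single_apply]
      split
      · exact zero_le_one
      · exact le_refl 0
  | succ n ih =>
      intro x
      have h1 : convPow μ (n+1) x = (ma μ * ma (convPow μ n)) x := by
        rw [← convPow_succ]; rfl
      rw [h1]
      exact mul_nonneg_apply hpos ih x

lemma mass_convPow {μ : G →₀ ℝ} (htotal : mass μ = 1) (n : ℕ) :
    mass (convPow μ n) = 1 := by
  induction n with
  | zero => exact mass_single_one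
  | succ n ih =>
      have : mass (ma μ * ma (convPow μ n)).coeff = 1 := by
        rw [mass_mul, htotal, ih, one_mul]
      rw [← this, ← convPow_succ]; rfl

lemma measOf_le_one {μ : G →₀ ℝ} (hpos : ∀ g : G, 0 ≤ μ g) (htotal : mass μ = 1)
    (n : ℕ) (A : Set G) : measOf (convPow μ n) A ≤ 1 := by
  have := measOf_le_mass (ν := convPow μ n) (convPow_nonneg hpos n) A
  rwa [mass_convPow htotal] at this

section Quotient2
variable {μ : G →₀ ℝ} {H : Subgroup G}

lemma mass_rho (htotal : mass μ = 1) (n : ℕ) : mass (rho μ H n) = 1 := by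
  rw [rho, mass, Finsupp.sum_mapDomain_index (fun _ => rfl) (fun _ _ _ => rfl)]
  exact mass_convPow htotal n

lemma Qop_apply (f : (G ⧸ H) →₀ ℝ) (c : G ⧸ H) :
    Qop μ f c = ∑ g ∈ μ.support, μ g * f (g⁻¹ • c) := by
  rw [Qop, Finsupp.sum_apply, Finsupp.sum]
  refine Finset.sum_congr rfl fun g _ => ?_
  rw [Finsupp.smul_apply, smul_eq_mul]
  congr 1
  have hc : c = g • (g⁻¹ • c) := (smul_inv_smul g c).symm
  rw [hc, Finsupp.mapDomain_apply (MulAction.injective g), inv_smul_smul]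

lemma sum_sq_le_dot (f : (G ⧸ H) →₀ ℝ) (T : Finset (G ⧸ H)) :
    ∑ c ∈ T, f c * f c ≤ dot f f := by
  rw [dot]
  have h1 : ∑ c ∈ T, f c * f c = ∑ c ∈ T ∩ f.support, f c * f c := by
    symm
    refine Finset.sum_subset (Finset.inter_subset_left) ?_
    intro c hc hcn
    have : c ∉ f.support := fun hmem => hcn (Finset.mem_inter.mpr ⟨hc, hmem⟩)
    rw [Finsupp.notMem_support_iff.mp this, zero_mul]
  rw [h1]
  refine Finset.sum_le_sum_of_subset_of_nonneg (Finset.inter_subset_right) ?_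
  intro c _ _
  exact mul_self_nonneg _

lemma supp_Qop (f : (G ⧸ H) →₀ ℝ) :
    (Qop μ f).support ⊆ μ.support.biUnion (fun g => f.support.image (fun x => g • x)) := by
  intro c hc
  rw [Qop] at hc
  have h := Finsupp.support_sum hc
  rw [Finset.mem_biUnion] at h ⊢
  obtain ⟨g, hg, hc2⟩ := h
  refine ⟨g, hg, ?_⟩
  have h3 := Finsupp.support_smul hc2
  have h4 := Finsupp.mapDomain_support h3
  exact h4

lemma dot_Qop_le (hpos : ∀ g : G, 0 ≤ μ g) (htotal : mass μ = 1) (f : (G ⧸ H) →₀ ℝ) :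
    dot (Qop μ f) (Qop μ f) ≤ dot f f := by
  set s := μ.support.biUnion (fun g => f.support.image (fun x => g • x)) with hs
  rw [dot_eq_superset _ (supp_Qop f)]
  have key : ∀ c ∈ s, Qop μ f c * Qop μ f c ≤ ∑ g ∈ μ.support, μ g * (f (g⁻¹ • c) * f (g⁻¹ • c)) := by
    intro c _
    have hcs : (∑ g ∈ μ.support, μ g * f (g⁻¹ • c)) ^ 2
        ≤ (∑ g ∈ μ.support, Real.sqrt (μ g) ^ 2) * ∑ g ∈ μ.support, (Real.sqrt (μ g) * f (g⁻¹ • c)) ^ 2 := by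
      have := Finset.sum_mul_sq_le_sq_mul_sq μ.support (fun g => Real.sqrt (μ g))
        (fun g => Real.sqrt (μ g) * f (g⁻¹ • c))
      calc (∑ g ∈ μ.support, μ g * f (g⁻¹ • c)) ^ 2
          = (∑ g ∈ μ.support, Real.sqrt (μ g) * (Real.sqrt (μ g) * f (g⁻¹ • c))) ^ 2 := by
            congr 1
            refine Finset.sum_congr rfl fun g _ => ?_
            rw [← mul_assoc, Real.mul_self_sqrt (hpos g)]
        _ ≤ _ := this
    have e1 : ∑ g ∈ μ.support, Real.sqrt (μ g) ^ 2 = 1 := by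
      rw [← htotal, mass, Finsupp.sum]
      refine Finset.sum_congr rfl fun g _ => Real.sq_sqrt (hpos g)
    have e2 : ∀ g ∈ μ.support, (Real.sqrt (μ g) * f (g⁻¹ • c)) ^ 2 = μ g * (f (g⁻¹ • c) * f (g⁻¹ • c)) := by
      intro g _
      rw [mul_pow, Real.sq_sqrt (hpos g), pow_two]
    rw [e1, one_mul, Finset.sum_congr rfl e2] at hcs
    calc Qop μ f c * Qop μ f c = (∑ g ∈ μ.support, μ g * f (g⁻¹ • c)) ^ 2 := by
          rw [pow_two, Qop_apply]
      _ ≤ _ := hcs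
  calc ∑ c ∈ s, Qop μ f c * Qop μ f c
      ≤ ∑ c ∈ s, ∑ g ∈ μ.support, μ g * (f (g⁻¹ • c) * f (g⁻¹ • c)) := Finset.sum_le_sum key
    _ = ∑ g ∈ μ.support, ∑ c ∈ s, μ g * (f (g⁻¹ • c) * f (g⁻¹ • c)) := Finset.sum_comm
    _ ≤ ∑ g ∈ μ.support, μ g * dot f f := by
        refine Finset.sum_le_sum fun g _ => ?_
        rw [← Finset.mul_sum]
        refine mul_le_mul_of_nonneg_left ?_ (hpos g)
        have : ∑ c ∈ s, f (g⁻¹ • c) * f (g⁻¹ • c) = ∑ c ∈ s.image (fun x => g⁻¹ • x), f c * f c := by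
          rw [Finset.sum_image (fun a _ b _ hab => MulAction.injective g⁻¹ hab)]
        rw [this]
        exact sum_sq_le_dot f _
    _ = dot f f := by
        rw [← Finset.sum_mul, ← mass_eq_sum_superset μ (subset_refl _), htotal, one_mul]

end Quotient2
end VA

namespace VA
variable {G : Type*} [Group G]
open scoped Classical Pointwise

section Quotient3
variable {μ : G →₀ ℝ} {H : Subgroup G}

lemma dot_rho (hsym : ∀ g : G, μ g⁻¹ = μ g) (m n : ℕ) :
    dot (rho μ H m) (rho μ H n) = measOf (convPow μ (m+n)) (H : Set G) := by
  have hsuppm : (rho μ H m).support ⊆ (convPow μ m).support.image QuotientGroup.mk := by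
    rw [rho]; exact Finsupp.mapDomain_support
  have step1 : measOf (convPow μ (m+n)) (H : Set G)
      = ∑ a ∈ (convPow μ m).support, ∑ b ∈ (convPow μ n).support,
        (if (a*b : G) ∈ (H : Set G) then convPow μ m a * convPow μ n b else 0) := by
    have e : measOf (convPow μ (m+n)) (H : Set G)
        = measOf (ma (convPow μ m) * ma (convPow μ n)) (H : Set G) := by
      rw [← convPow_add]; rfl
    rw [e, measOf_mul]
  rw [step1]
  calc dot (rho μ H m) (rho μ H n)
      = ∑ c ∈ (convPow μ m).support.image QuotientGroup.mk, rho μ H m c * rho μ H n c :=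
        dot_eq_superset _ hsuppm
    _ = ∑ a ∈ (convPow μ m).support, convPow μ m a * rho μ H n (QuotientGroup.mk a) := by
        have expand : ∀ c ∈ (convPow μ m).support.image QuotientGroup.mk,
            rho μ H m c * rho μ H n c = ∑ a ∈ (convPow μ m).support,
              (if QuotientGroup.mk a = c then convPow μ m a * rho μ H n c else 0) := by
          intro c _
          rw [rho, mapDomain_apply', Finset.sum_mul]
          refine Finset.sum_congr rfl fun a _ => ?_
          rw [ite_mul, zero_mul]
        rw [Finset.sum_congr rfl expand, Finset.sum_comm]
        refine Finset.sum_congr rfl fun a ha => ?_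
        rw [Finset.sum_ite_eq _ (QuotientGroup.mk a)
          (fun c => convPow μ m a * rho μ H n c),
          if_pos (Finset.mem_image_of_mem _ ha)]
    _ = ∑ a ∈ (convPow μ m).support, ∑ b ∈ (convPow μ n).support,
          (if (QuotientGroup.mk a : G ⧸ H) = QuotientGroup.mk b
            then convPow μ m a * convPow μ n b else 0) := by
        refine Finset.sum_congr rfl fun a _ => ?_
        rw [rho, mapDomain_apply', Finset.mul_sum]
        refine Finset.sum_congr rfl fun b _ => ?_
        by_cases h : (QuotientGroup.mk b : G ⧸ H) = QuotientGroup.mk a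
        · rw [if_pos h, if_pos h.symm]
        · rw [if_neg h, if_neg (fun hh => h hh.symm), mul_zero]
    _ = ∑ a ∈ (convPow μ m).support, ∑ b ∈ (convPow μ n).support,
          (if (a*b : G) ∈ (H : Set G) then convPow μ m a * convPow μ n b else 0) := by
        have hsm := convPow_symm μ hsym m
        refine Finset.sum_nbij' (fun a => a⁻¹) (fun a => a⁻¹)
          (fun a ha => support_inv_mem hsm ha) (fun a ha => support_inv_mem hsm ha)
          (fun a _ => inv_inv a) (fun a _ => inv_inv a) (fun a ha => ?_)
        refine Finset.sum_congr rfl fun b _ => ?_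
        refine if_congr ?_ ?_ rfl
        · show _ ↔ a⁻¹ * b ∈ (H : Set G)
          rw [SetLike.mem_coe, QuotientGroup.eq]
        · show _ = convPow μ m a⁻¹ * _
          rw [hsm]
end Quotient3
end VA

namespace VA
variable {G : Type*} [Group G]
open scoped Classical Pointwise
open Filter Topology

section Aux
variable {H : Subgroup G}

lemma value_le_mass {α : Type*} {f : α →₀ ℝ} (hf : ∀ c, 0 ≤ f c) (c : α) : f c ≤ mass f := by
  rw [mass, Finsupp.sum]
  by_cases hc : c ∈ f.support
  · exact Finset.single_le_sum (fun i _ => hf i) hc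
  · rw [Finsupp.notMem_support_iff.mp hc]
    exact Finset.sum_nonneg fun i _ => hf i

lemma dot_comm (f h : (G ⧸ H) →₀ ℝ) : dot f h = dot h f := by
  rw [dot_eq_superset (s := f.support ∪ h.support) h Finset.subset_union_left,
    dot_eq_superset (s := f.support ∪ h.support) f Finset.subset_union_right]
  exact Finset.sum_congr rfl fun c _ => mul_comm _ _

lemma dot_sub_self (f h : (G ⧸ H) →₀ ℝ) :
    dot (f - h) (f - h) = dot f f - 2 * dot f h + dot h h := by
  set s := (f.support ∪ h.support) ∪ (f - h).support with hs
  have h1 : (f - h).support ⊆ s := Finset.subset_union_right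
  have h2 : f.support ⊆ s := subset_trans Finset.subset_union_left Finset.subset_union_left
  have h3 : h.support ⊆ s := subset_trans Finset.subset_union_right Finset.subset_union_left
  rw [dot_eq_superset _ h1, dot_eq_superset _ h2, dot_eq_superset _ h3, dot_eq_superset _ h2]
  have : ∀ c ∈ s, (f - h) c * (f - h) c
      = f c * f c - 2 * (f c * h c) + h c * h c := by
    intro c _
    rw [Finsupp.sub_apply]
    ring
  rw [Finset.sum_congr rfl this, Finset.sum_add_distrib, Finset.sum_sub_distrib,
    ← Finset.mul_sum]

lemma value_sq_le_dot (f : (G ⧸ H) →₀ ℝ) (c : G ⧸ H) : f c * f c ≤ dot f f := by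
  have := sum_sq_le_dot f {c}
  rwa [Finset.sum_singleton] at this

end Aux

section LemA
variable {μ : G →₀ ℝ} {H : Subgroup G}

theorem finiteIndex_of_measOf_lower (hpos : ∀ g : G, 0 ≤ μ g)
    (hsym : ∀ g : G, μ g⁻¹ = μ g) (htotal : mass μ = 1)
    (hgen : Subgroup.closure (μ.support : Set G) = ⊤)
    (hid : (1 : G) ∈ μ.support)
    {δ : ℝ} (hδ : 0 < δ)
    (hev : ∀ k : ℕ, δ ≤ measOf (convPow μ (2*k)) (H : Set G)) :
    H.FiniteIndex := by
  classical
  -- the even-time return masses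
  set b : ℕ → ℝ := fun k => measOf (convPow μ (2*k)) (H : Set G) with hb
  have hrho : ∀ k, b k = dot (rho μ H k) (rho μ H k) := by
    intro k
    show measOf (convPow μ (2*k)) (H : Set G) = _
    rw [dot_rho hsym k k, show k + k = 2*k by omega]
  have hanti : Antitone b := by
    have step : ∀ k, b (k+1) ≤ b k := by
      intro k
      rw [hrho, hrho, rho_succ]
      exact dot_Qop_le hpos htotal _
    exact antitone_nat_of_succ_le step
  have hble : ∀ k, b k ≤ 1 := fun k => measOf_le_one hpos htotal _ _
  have hbdd : BddBelow (Set.range b) := ⟨δ, by rintro x ⟨k, rfl⟩; exact hev k⟩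
  set L : ℝ := ⨅ k, b k with hL
  have hδL : δ ≤ L := le_ciInf fun k => hev k
  have htendb : Tendsto b atTop (𝓝 L) := tendsto_atTop_ciInf hanti hbdd
  -- the functions u m = rho (2 m)
  set u : ℕ → ((G ⧸ H) →₀ ℝ) := fun m => rho μ H (2*m) with hu
  have hdot : ∀ i j, dot (u i) (u j) = b (i+j) := by
    intro i j
    show dot (rho μ H (2*i)) (rho μ H (2*j)) = measOf (convPow μ (2*(i+j))) (H : Set G)
    rw [dot_rho hsym, show 2*i + 2*j = 2*(i+j) by omega]
  have hun : ∀ m c, 0 ≤ u m c := fun m c =>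
    rho_nonneg hpos (convPow_nonneg hpos) (2*m) c
  have humass : ∀ m, mass (u m) = 1 := fun m => mass_rho htotal (2*m)
  have hub : ∀ m c, u m c ∈ Set.Icc (0:ℝ) 1 := by
    intro m c
    refine ⟨hun m c, ?_⟩
    calc u m c ≤ mass (u m) := value_le_mass (hun m) c
      _ = 1 := humass m
  -- ultrafilter and pointwise limits
  set U : Ultrafilter ℕ := Ultrafilter.of atTop with hUdef
  have hU : (U : Filter ℕ) ≤ atTop := Ultrafilter.of_le atTop
  have hex : ∀ c : G ⧸ H, ∃ x ∈ Set.Icc (0:ℝ) 1,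
      Tendsto (fun m => u m c) U (𝓝 x) := by
    intro c
    have hle : (U.map (fun m => u m c) : Filter ℝ) ≤ Filter.principal (Set.Icc 0 1) := by
      rw [Ultrafilter.coe_map, Filter.le_principal_iff, Filter.mem_map]
      exact Filter.univ_mem' (fun m => hub m c)
    obtain ⟨x, hx, hlim⟩ := (isCompact_Icc (a := (0:ℝ)) (b := 1)).ultrafilter_le_nhds
      (U.map (fun m => u m c)) hle
    exact ⟨x, hx, hlim⟩
  choose w hwmem hwt using hex
  have hw0 : ∀ c, 0 ≤ w c := fun c => (hwmem c).1
  -- (F1): ℓ² bound for w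
  have hF1 : ∀ F : Finset (G ⧸ H), (∑ c ∈ F, w c * w c) ≤ 1 := by
    intro F
    have hlim : Tendsto (fun m => ∑ c ∈ F, u m c * u m c) U
        (𝓝 (∑ c ∈ F, w c * w c)) :=
      tendsto_finset_sum F (fun c _ => (hwt c).mul (hwt c))
    refine le_of_tendsto hlim (Filter.Eventually.of_forall fun m => ?_)
    calc ∑ c ∈ F, u m c * u m c ≤ dot (u m) (u m) := sum_sq_le_dot _ _
      _ = b (m+m) := hdot m m
      _ ≤ 1 := hble _
  -- (F2): inner products with w recover L
  have hF2 : ∀ k, (∑ c ∈ (u k).support, u k c * w c) = L := by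
    intro k
    have hlim1 : Tendsto (fun m => ∑ c ∈ (u k).support, u k c * u m c) U
        (𝓝 (∑ c ∈ (u k).support, u k c * w c)) :=
      tendsto_finset_sum _ (fun c _ => (hwt c).const_mul (u k c))
    have heq : ∀ m, (∑ c ∈ (u k).support, u k c * u m c) = b (m + k) := by
      intro m
      rw [show (∑ c ∈ (u k).support, u k c * u m c) = dot (u k) (u m) from rfl, hdot,
        add_comm]
    have hlim2 : Tendsto (fun m => ∑ c ∈ (u k).support, u k c * u m c) U (𝓝 L) := by
      rw [funext heq]
      exact (htendb.comp (Filter.tendsto_add_atTop_nat k)).mono_left hU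
    exact tendsto_nhds_unique hlim1 hlim2
  -- the value of w at the base point
  have hw1 : w (QuotientGroup.mk (1:G)) = L := by
    have h0 : (u 0) = Finsupp.single (QuotientGroup.mk (1:G)) (1:ℝ) := by
      show rho μ H (2*0) = _
      rw [show 2*0 = 0 by omega, rho]
      show Finsupp.mapDomain _ (Finsupp.single 1 1) = _
      rw [Finsupp.mapDomain_single]
    have h2 := hF2 0
    rw [h0, Finsupp.support_single_ne_zero _ (one_ne_zero), Finset.sum_singleton,
      Finsupp.single_eq_same, one_mul] at h2
    exact h2
  -- consecutive u's have the same limits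
  have hdiffsq : ∀ (m : ℕ) (c : G ⧸ H), (u (m+1) c - u m c) * (u (m+1) c - u m c)
      ≤ b (2*m+2) - 2 * b (2*m+1) + b (2*m) := by
    intro m c
    have h1 : (u (m+1) - u m) c = u (m+1) c - u m c := Finsupp.sub_apply _ _ _
    calc (u (m+1) c - u m c) * (u (m+1) c - u m c)
        = (u (m+1) - u m) c * (u (m+1) - u m) c := by rw [h1]
      _ ≤ dot (u (m+1) - u m) (u (m+1) - u m) := value_sq_le_dot _ c
      _ = dot (u (m+1)) (u (m+1)) - 2 * dot (u (m+1)) (u m) + dot (u m) (u m) :=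
          dot_sub_self _ _
      _ = b (2*m+2) - 2 * b (2*m+1) + b (2*m) := by
          rw [hdot, hdot, hdot, show (m+1)+(m+1) = 2*m+2 by omega,
            show (m+1)+m = 2*m+1 by omega, show m+m = 2*m by omega]
  have hbshift : ∀ (j : ℕ), Tendsto (fun m => b (2*m + j)) atTop (𝓝 L) := by
    intro j
    refine htendb.comp ?_
    exact tendsto_atTop_mono (fun m => by simp only [id_eq]; omega) tendsto_id
  have hdtend : Tendsto (fun m => b (2*m+2) - 2 * b (2*m+1) + b (2*m)) atTop (𝓝 0) := by
    have h := ((hbshift 2).sub ((hbshift 1).const_mul 2)).add (hbshift 0)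
    have : L - 2 * L + L = 0 := by ring
    rwa [this] at h
  have hdiff0 : ∀ c, Tendsto (fun m => u (m+1) c - u m c) atTop (𝓝 0) := by
    intro c
    have hsq : Tendsto (fun m => Real.sqrt (b (2*m+2) - 2 * b (2*m+1) + b (2*m))) atTop
        (𝓝 0) := by
      have := (Real.continuous_sqrt.tendsto 0).comp hdtend
      rwa [Real.sqrt_zero] at this
    refine squeeze_zero_norm (fun m => ?_) hsq
    have := hdiffsq m c
    rw [show (u (m+1) c - u m c) * (u (m+1) c - u m c) = (u (m+1) c - u m c)^2 by ring] at this
    exact Real.abs_le_sqrt this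
  have hwshift : ∀ c, Tendsto (fun m => u (m+1) c) U (𝓝 (w c)) := by
    intro c
    have hfe : (fun m => u (m+1) c) = fun m => u m c + (u (m+1) c - u m c) :=
      funext fun m => by ring
    rw [hfe]
    have h2 : Tendsto (fun m => u (m+1) c - u m c) U (𝓝 0) := (hdiff0 c).mono_left hU
    have := (hwt c).add h2
    rwa [add_zero] at this
  -- (F3): invariance of w under two steps of the walk
  have hQQ : ∀ (m : ℕ) (c : G ⧸ H), u (m+1) c = ∑ g ∈ μ.support, ∑ h ∈ μ.support,
      μ g * (μ h * u m (h⁻¹ • (g⁻¹ • c))) := by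
    intro m c
    have e1 : u (m+1) = Qop μ (Qop μ (u m)) := by
      show rho μ H (2*(m+1)) = _
      rw [show 2*(m+1) = (2*m) + 1 + 1 by omega, rho_succ, rho_succ]
    rw [e1, Qop_apply]
    refine Finset.sum_congr rfl fun g _ => ?_
    rw [Qop_apply, Finset.mul_sum]
  have hF3 : ∀ c, (∑ g ∈ μ.support, ∑ h ∈ μ.support,
      μ g * (μ h * w (h⁻¹ • (g⁻¹ • c)))) = w c := by
    intro c
    have hfe : (fun m => u (m+1) c) = fun m => ∑ g ∈ μ.support, ∑ h ∈ μ.support,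
        μ g * (μ h * u m (h⁻¹ • (g⁻¹ • c))) := funext fun m => hQQ m c
    have hlim1 : Tendsto (fun m => u (m+1) c)
        U (𝓝 (∑ g ∈ μ.support, ∑ h ∈ μ.support, μ g * (μ h * w (h⁻¹ • (g⁻¹ • c))))) := by
      rw [hfe]
      exact tendsto_finset_sum _ (fun g _ => tendsto_finset_sum _
        (fun h _ => ((hwt _).const_mul (μ h)).const_mul (μ g)))
    exact tendsto_nhds_unique hlim1 (hwshift c)
  -- a finiteness helper
  have hLpos : 0 < L := lt_of_lt_of_le hδ hδL
  have hcard : ∀ t : ℝ, 0 < t → Set.Finite {c : G ⧸ H | t ≤ w c} := by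
    intro t ht
    by_contra hinf
    have hinf' : Set.Infinite {c : G ⧸ H | t ≤ w c} := hinf
    obtain ⟨n, hn⟩ := exists_nat_gt (1 / (t*t))
    obtain ⟨F, hFsub, hFcard⟩ := hinf'.exists_subset_card_eq n
    have h1 : (F.card : ℝ) * (t*t) ≤ ∑ c ∈ F, w c * w c := by
      have h2 := Finset.card_nsmul_le_sum F (fun c => w c * w c) (t*t) ?_
      · rwa [nsmul_eq_mul] at h2
      · intro c hc
        have htc : t ≤ w c := hFsub hc
        exact mul_le_mul htc htc (le_of_lt ht) (hw0 c)
    rw [hFcard] at h1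
    have h3 : 1 < (n : ℝ) * (t*t) := by
      rw [div_lt_iff₀ (by positivity)] at hn
      linarith
    have h4 := le_trans h1 (hF1 F)
    linarith
  -- the maximum of w
  have hAfin : Set.Finite {c : G ⧸ H | L ≤ w c} := hcard L hLpos
  have hAne : QuotientGroup.mk (1:G) ∈ hAfin.toFinset := by
    rw [Set.Finite.mem_toFinset]
    show L ≤ w _
    rw [hw1]
  obtain ⟨cs, hcsA, hcsmax⟩ := Finset.exists_max_image hAfin.toFinset w ⟨_, hAne⟩
  have hcsL : L ≤ w cs := by
    rw [Set.Finite.mem_toFinset] at hcsA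
    exact hcsA
  have hMglobal : ∀ c, w c ≤ w cs := by
    intro c
    by_cases hc : L ≤ w c
    · exact hcsmax c (by rw [Set.Finite.mem_toFinset]; exact hc)
    · push_neg at hc
      exact le_trans (le_of_lt hc) hcsL
  -- maximum principle: the set where w = max is closed under the generators
  have hstep : ∀ c, w c = w cs → ∀ g ∈ μ.support, ∀ h ∈ μ.support,
      w (h⁻¹ • (g⁻¹ • c)) = w cs := by
    intro c hc g hg h hh
    have hsum1 : (∑ g' ∈ μ.support, ∑ h' ∈ μ.support, μ g' * (μ h' * w cs)) = w cs := by
      have hmass : (∑ g' ∈ μ.support, μ g') = 1 := by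
        rw [← mass_eq_sum_superset μ (subset_refl _), htotal]
      calc (∑ g' ∈ μ.support, ∑ h' ∈ μ.support, μ g' * (μ h' * w cs))
          = ∑ g' ∈ μ.support, μ g' * ((∑ h' ∈ μ.support, μ h') * w cs) := by
            refine Finset.sum_congr rfl fun g' _ => ?_
            rw [Finset.sum_mul, Finset.mul_sum]
        _ = ∑ g' ∈ μ.support, μ g' * w cs := by rw [hmass, one_mul]
        _ = (∑ g' ∈ μ.support, μ g') * w cs := by rw [Finset.sum_mul]
        _ = w cs := by rw [hmass, one_mul]
    have hzero : (∑ g' ∈ μ.support, ∑ h' ∈ μ.support,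
        μ g' * (μ h' * (w cs - w (h'⁻¹ • (g'⁻¹ • c))))) = 0 := by
      have h5 := hF3 c
      rw [hc] at h5
      have hexp : ∀ g' ∈ μ.support, ∀ h' ∈ μ.support,
          μ g' * (μ h' * (w cs - w (h'⁻¹ • (g'⁻¹ • c))))
            = μ g' * (μ h' * w cs) - μ g' * (μ h' * w (h'⁻¹ • (g'⁻¹ • c))) := by
        intro g' _ h' _; ring
      calc (∑ g' ∈ μ.support, ∑ h' ∈ μ.support,
            μ g' * (μ h' * (w cs - w (h'⁻¹ • (g'⁻¹ • c)))))
          = ∑ g' ∈ μ.support, ∑ h' ∈ μ.support,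
            (μ g' * (μ h' * w cs) - μ g' * (μ h' * w (h'⁻¹ • (g'⁻¹ • c)))) := by
            refine Finset.sum_congr rfl fun g' hg' => Finset.sum_congr rfl fun h' hh' => ?_
            exact hexp g' hg' h' hh'
        _ = (∑ g' ∈ μ.support, ∑ h' ∈ μ.support, μ g' * (μ h' * w cs))
            - ∑ g' ∈ μ.support, ∑ h' ∈ μ.support, μ g' * (μ h' * w (h'⁻¹ • (g'⁻¹ • c))) := by
            rw [← Finset.sum_sub_distrib]
            refine Finset.sum_congr rfl fun g' _ => ?_
            rw [← Finset.sum_sub_distrib]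
        _ = w cs - w c := by rw [hsum1, h5, hc]
        _ = 0 := by rw [hc, sub_self]
    have hnn : ∀ g' ∈ μ.support, 0 ≤ ∑ h' ∈ μ.support,
        μ g' * (μ h' * (w cs - w (h'⁻¹ • (g'⁻¹ • c)))) := by
      intro g' _
      refine Finset.sum_nonneg fun h' _ => ?_
      exact mul_nonneg (hpos g') (mul_nonneg (hpos h') (sub_nonneg.mpr (hMglobal _)))
    have houter := (Finset.sum_eq_zero_iff_of_nonneg hnn).mp hzero g hg
    have hinner : ∀ h' ∈ μ.support, 0 ≤ μ g * (μ h' * (w cs - w (h'⁻¹ • (g⁻¹ • c)))) := by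
      intro h' _
      exact mul_nonneg (hpos g) (mul_nonneg (hpos h') (sub_nonneg.mpr (hMglobal _)))
    have hterm := (Finset.sum_eq_zero_iff_of_nonneg hinner).mp houter h hh
    have hgne : μ g ≠ 0 := Finsupp.mem_support_iff.mp hg
    have hhne : μ h ≠ 0 := Finsupp.mem_support_iff.mp hh
    have : w cs - w (h⁻¹ • (g⁻¹ • c)) = 0 := by
      rcases mul_eq_zero.mp hterm with h1 | h1
      · exact absurd h1 hgne
      rcases mul_eq_zero.mp h1 with h2 | h2
      · exact absurd h2 hhne
      · exact h2
    linarith [this]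
  have hstep1 : ∀ c, w c = w cs → ∀ s' ∈ μ.support, w (s' • c) = w cs := by
    intro c hc s' hs'
    have h1 : s'⁻¹ ∈ μ.support := support_inv_mem hsym hs'
    have h2 := hstep c hc s'⁻¹ h1 1 hid
    rwa [inv_one, one_smul, inv_inv] at h2
  have hlist : ∀ l : List G, (∀ a ∈ l, a ∈ μ.support) → ∀ c, w c = w cs →
      w (l.prod • c) = w cs := by
    intro l
    induction l with
    | nil => intro _ c hc; rwa [List.prod_nil, one_smul]
    | cons a t ih =>
        intro hmem c hc
        have h1 : w (t.prod • c) = w cs :=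
          ih (fun x hx => hmem x (List.mem_cons_of_mem a hx)) c hc
        have h2 := hstep1 _ h1 a (hmem a List.mem_cons_self)
        rwa [List.prod_cons, mul_smul]
  have hword : ∀ x : G, ∃ l : List G, (∀ a ∈ l, a ∈ μ.support) ∧ l.prod = x := by
    intro x
    have hx : x ∈ Subgroup.closure (μ.support : Set G) := by rw [hgen]; trivial
    refine Subgroup.closure_induction ?_ ?_ ?_ ?_ hx
    · intro g hg
      exact ⟨[g], by simpa using hg, by simp⟩
    · exact ⟨[], by simp, rfl⟩
    · rintro x' y' _ _ ⟨l1, hm1, hp1⟩ ⟨l2, hm2, hp2⟩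
      refine ⟨l1 ++ l2, ?_, by rw [List.prod_append, hp1, hp2]⟩
      intro a ha
      rcases List.mem_append.mp ha with h | h
      · exact hm1 a h
      · exact hm2 a h
    · rintro x' _ ⟨l, hm, hp⟩
      refine ⟨(l.map (fun y => y⁻¹)).reverse, ?_, ?_⟩
      · intro a ha
        rw [List.mem_reverse, List.mem_map] at ha
        obtain ⟨y', hy', rfl⟩ := ha
        exact support_inv_mem hsym (hm y' hy')
      · rw [← List.prod_inv_reverse, hp]
  have hwconst : ∀ c, w c = w cs := by
    intro c
    obtain ⟨y, rfl⟩ := QuotientGroup.mk_surjective c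
    obtain ⟨z, hz⟩ := QuotientGroup.mk_surjective cs
    obtain ⟨l, hl, hlp⟩ := hword (y * z⁻¹)
    have h1 := hlist l hl cs rfl
    rw [hlp] at h1
    have h2 : ((y * z⁻¹) • cs) = QuotientGroup.mk y := by
      rw [← hz]
      show QuotientGroup.mk ((y * z⁻¹) * z) = _
      rw [inv_mul_cancel_right]
    rwa [h2] at h1
  -- conclude finiteness of the quotient
  have hMpos : 0 < w cs := lt_of_lt_of_le hLpos hcsL
  have hfin : Finite (G ⧸ H) := by
    by_contra hinf
    rw [not_finite_iff_infinite] at hinf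
    have huniv : ({c : G ⧸ H | w cs ≤ w c} : Set (G ⧸ H)) = Set.univ := by
      ext c; simp [hwconst c]
    have h1 := hcard (w cs) hMpos
    rw [huniv] at h1
    rw [Set.finite_univ_iff] at h1
    exact absurd h1 (by rw [not_finite_iff_infinite]; exact hinf)
  refine ⟨?_⟩
  have : Nat.card (G ⧸ H) ≠ 0 := Nat.card_ne_zero.mpr ⟨⟨QuotientGroup.mk 1⟩, hfin⟩
  exact this


end LemA
end VA

namespace VA
variable {G : Type*} [Group G]
open scoped Classical Pointwise
open Filter Topology

section Assemble
variable {μ : G →₀ ℝ}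

lemma measOf_even_antitone (hpos : ∀ g : G, 0 ≤ μ g) (hsym : ∀ g : G, μ g⁻¹ = μ g)
    (htotal : mass μ = 1) (H : Subgroup G) :
    Antitone fun k => measOf (convPow μ (2*k)) (H : Set G) := by
  refine antitone_nat_of_succ_le fun k => ?_
  have h1 : ∀ j, measOf (convPow μ (2*j)) (H : Set G) = dot (rho μ H j) (rho μ H j) := by
    intro j
    rw [dot_rho hsym j j, show j + j = 2*j by omega]
  rw [h1, h1, rho_succ]
  exact dot_Qop_le hpos htotal _

/-- involution set -/
def ISet (G : Type*) [Group G] : Set G := {g : G | g ^ 2 = 1}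

lemma comm_bound (hpos : ∀ g : G, 0 ≤ μ g) (htotal : mass μ = 1)
    {α : ℝ} (hα0 : 0 ≤ α) {N : ℕ} (hN : ∀ n, N ≤ n → α ≤ measOf (convPow μ n) (ISet G))
    {s t : ℕ} (hs : N ≤ s) (ht : N ≤ t) :
    α * α + α - 1 ≤ ∑ x ∈ (convPow μ s).support,
      convPow μ s x * measOf (convPow μ t) (Subgroup.centralizer {x} : Set G) := by
  set f := convPow μ s with hf
  set g := convPow μ t with hg
  have hfpos : ∀ x, 0 ≤ f x := convPow_nonneg hpos s
  have hgpos : ∀ x, 0 ≤ g x := convPow_nonneg hpos t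
  -- the three quantities
  have hA1 : measOf f (ISet G) * measOf g (ISet G)
      = ∑ x ∈ f.support, ∑ y ∈ g.support,
        (if x ∈ ISet G ∧ y ∈ ISet G then f x * g y else 0) := by
    rw [measOf_eq_sum, measOf_eq_sum, Finset.sum_mul_sum]
    refine Finset.sum_congr rfl fun x _ => Finset.sum_congr rfl fun y _ => ?_
    by_cases hx : x ∈ ISet G <;> by_cases hy : y ∈ ISet G <;>
      simp [hx, hy]
  have hA2 : measOf (convPow μ (s+t)) (ISet G)
      = ∑ x ∈ f.support, ∑ y ∈ g.support, (if x*y ∈ ISet G then f x * g y else 0) := by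
    have e : measOf (convPow μ (s+t)) (ISet G) = measOf (ma f * ma g) (ISet G) := by
      rw [← convPow_add]; rfl
    rw [e, measOf_mul]
  have hA3 : (∑ x ∈ f.support, ∑ y ∈ g.support, f x * g y) = 1 := by
    rw [← Finset.sum_mul_sum, ← mass_eq_sum_superset f (subset_refl _),
      ← mass_eq_sum_superset g (subset_refl _), mass_convPow htotal, mass_convPow htotal,
      one_mul]
  -- termwise inequality
  have hterm : ∀ x ∈ f.support, ∀ y ∈ g.support,
      (if x ∈ ISet G ∧ y ∈ ISet G then f x * g y else 0)
        + (if x*y ∈ ISet G then f x * g y else 0) - f x * g y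
      ≤ (if y ∈ (Subgroup.centralizer {x} : Set G) then f x * g y else 0) := by
    intro x _ y _
    have hvv : 0 ≤ f x * g y := mul_nonneg (hfpos x) (hgpos y)
    by_cases h1 : x ∈ ISet G ∧ y ∈ ISet G
    · by_cases h2 : x*y ∈ ISet G
      · have hcomm : y ∈ (Subgroup.centralizer {x} : Set G) := by
          have hx2 : x * x = 1 := by
            have := h1.1
            rwa [ISet, Set.mem_setOf_eq, pow_two] at this
          have hy2 : y * y = 1 := by
            have := h1.2
            rwa [ISet, Set.mem_setOf_eq, pow_two] at this
          have hxy2 : (x*y) * (x*y) = 1 := by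
            have := h2
            rwa [ISet, Set.mem_setOf_eq, pow_two] at this
          rw [SetLike.mem_coe, Subgroup.mem_centralizer_iff]
          intro a ha
          rw [Set.mem_singleton_iff] at ha
          rw [ha]
          have h4 : (x*x) * (y * x) * (y*y) = x * ((x*y)*(x*y)) * y := by group
          rw [hx2, hy2, hxy2] at h4
          have h5 : y*x = x*y := by simpa using h4
          exact h5.symm
        rw [if_pos h1, if_pos h2, if_pos hcomm]
        linarith
      · rw [if_pos h1, if_neg h2]
        split <;> linarith
    · rw [if_neg h1]
      by_cases h2 : x*y ∈ ISet G
      · rw [if_pos h2]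
        split <;> linarith
      · rw [if_neg h2]
        split <;> linarith
  -- put it together
  have hsum : measOf f (ISet G) * measOf g (ISet G) + measOf (convPow μ (s+t)) (ISet G) - 1
      ≤ ∑ x ∈ f.support, ∑ y ∈ g.support,
        (if y ∈ (Subgroup.centralizer {x} : Set G) then f x * g y else 0) := by
    have e1 : (∑ x ∈ f.support, ∑ y ∈ g.support,
        ((if x ∈ ISet G ∧ y ∈ ISet G then f x * g y else 0)
          + (if x*y ∈ ISet G then f x * g y else 0) - f x * g y))
        = (∑ x ∈ f.support, ∑ y ∈ g.support,
            (if x ∈ ISet G ∧ y ∈ ISet G then f x * g y else 0))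
          + (∑ x ∈ f.support, ∑ y ∈ g.support, (if x*y ∈ ISet G then f x * g y else 0))
          - (∑ x ∈ f.support, ∑ y ∈ g.support, f x * g y) := by
      rw [← Finset.sum_add_distrib, ← Finset.sum_sub_distrib]
      refine Finset.sum_congr rfl fun x _ => ?_
      rw [← Finset.sum_add_distrib, ← Finset.sum_sub_distrib]
    rw [hA1, hA2, ← hA3, ← e1]
    exact Finset.sum_le_sum fun x hx => Finset.sum_le_sum fun y hy => hterm x hx y hy
  have hend : (∑ x ∈ f.support, ∑ y ∈ g.support,
      (if y ∈ (Subgroup.centralizer {x} : Set G) then f x * g y else 0))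
      = ∑ x ∈ f.support, f x * measOf g (Subgroup.centralizer {x} : Set G) := by
    refine Finset.sum_congr rfl fun x _ => ?_
    rw [measOf_eq_sum, Finset.mul_sum]
    refine Finset.sum_congr rfl fun y _ => ?_
    split <;> simp
  have hμs := hN s hs
  have hμt := hN t ht
  have hμst := hN (s+t) (by omega)
  have h2 : α * α ≤ measOf f (ISet G) * measOf g (ISet G) := by
    exact mul_le_mul hμs hμt hα0 (measOf_nonneg hfpos _)
  calc α * α + α - 1 ≤ measOf f (ISet G) * measOf g (ISet G)
        + measOf (convPow μ (s+t)) (ISet G) - 1 := by linarith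
    _ ≤ _ := le_trans hsum (le_of_eq hend)

end Assemble
end VA

namespace VA
variable {G : Type*} [Group G]
open scoped Classical Pointwise
open Filter Topology

section Final
variable {μ : G →₀ ℝ}

/-- elements whose centralizer carries mass `ε` at all even times -/
def Vset (μ : G →₀ ℝ) (ε : ℝ) : Set G :=
  {x : G | ∀ k : ℕ, ε ≤ measOf (convPow μ (2*k)) (Subgroup.centralizer {x} : Set G)}

lemma measOf_Vset (hpos : ∀ g : G, 0 ≤ μ g) (hsym : ∀ g : G, μ g⁻¹ = μ g)
    (htotal : mass μ = 1)
    {α : ℝ} (hα0 : 0 ≤ α) (hεnn : 0 ≤ α*α + α - 1) {N : ℕ}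
    (hN : ∀ n, N ≤ n → α ≤ measOf (convPow μ n) (ISet G))
    {k : ℕ} (hk : N ≤ k) :
    (α*α + α - 1)/2 ≤ measOf (convPow μ (2*k)) (Vset μ ((α*α + α - 1)/2)) := by
  classical
  set ε := α*α + α - 1 with hε
  set s := 2*k with hs
  set νs := convPow μ s with hνs
  have hνspos : ∀ x, 0 ≤ νs x := convPow_nonneg hpos s
  set V := Vset μ (ε/2) with hV
  have hkx : ∀ x : G, ∃ j : ℕ, x ∉ V →
      measOf (convPow μ (2*j)) (Subgroup.centralizer {x} : Set G) < ε/2 := by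
    intro x
    by_cases hx : x ∈ V
    · exact ⟨0, fun hc => absurd hx hc⟩
    · have hx' : ¬ ∀ j : ℕ, ε/2 ≤ measOf (convPow μ (2*j)) (Subgroup.centralizer {x} : Set G) := hx
      push_neg at hx'
      obtain ⟨j, hj⟩ := hx'
      exact ⟨j, fun _ => hj⟩
  choose kx hkxs using hkx
  set K := max N (νs.support.sup kx) with hK
  have hsN : N ≤ s := by omega
  have htN : N ≤ 2*K := by
    have : N ≤ K := le_max_left _ _
    omega
  have hcomm := comm_bound hpos htotal hα0 hN hsN htN
  have hterm : ∀ x ∈ νs.support,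
      νs x * measOf (convPow μ (2*K)) (Subgroup.centralizer {x} : Set G)
        ≤ (if x ∈ V then νs x else 0) + νs x * (ε/2) := by
    intro x hx
    have hanti := measOf_even_antitone hpos hsym htotal (Subgroup.centralizer {x})
    by_cases hxV : x ∈ V
    · rw [if_pos hxV]
      have h1 : measOf (convPow μ (2*K)) (Subgroup.centralizer {x} : Set G) ≤ 1 :=
        measOf_le_one hpos htotal _ _
      have h2 : νs x * measOf (convPow μ (2*K)) (Subgroup.centralizer {x} : Set G) ≤ νs x * 1 :=
        mul_le_mul_of_nonneg_left h1 (hνspos x)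
      have h5 : 0 ≤ νs x * (ε/2) := mul_nonneg (hνspos x) (by rw [hε]; linarith)
      linarith
    · rw [if_neg hxV]
      have hKk : kx x ≤ K := le_trans (Finset.le_sup hx) (le_max_right _ _)
      have h1 : measOf (convPow μ (2*K)) (Subgroup.centralizer {x} : Set G)
          ≤ measOf (convPow μ (2*(kx x))) (Subgroup.centralizer {x} : Set G) := hanti hKk
      have h2 := hkxs x hxV
      have h3 : νs x * measOf (convPow μ (2*K)) (Subgroup.centralizer {x} : Set G)
          ≤ νs x * (ε/2) := mul_le_mul_of_nonneg_left (le_trans h1 (le_of_lt h2)) (hνspos x)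
      linarith
  have hsum : (∑ x ∈ νs.support,
      νs x * measOf (convPow μ (2*K)) (Subgroup.centralizer {x} : Set G))
      ≤ measOf νs V + ε/2 := by
    calc (∑ x ∈ νs.support,
        νs x * measOf (convPow μ (2*K)) (Subgroup.centralizer {x} : Set G))
        ≤ ∑ x ∈ νs.support, ((if x ∈ V then νs x else 0) + νs x * (ε/2)) :=
          Finset.sum_le_sum hterm
      _ = (∑ x ∈ νs.support, (if x ∈ V then νs x else 0))
          + (∑ x ∈ νs.support, νs x) * (ε/2) := by
          rw [Finset.sum_add_distrib, Finset.sum_mul]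
      _ = measOf νs V + ε/2 := by
          rw [← measOf_eq_sum, ← mass_eq_sum_superset νs (subset_refl _),
            mass_convPow htotal, one_mul]
  have := le_trans hcomm hsum
  linarith

end Final
end VA

namespace VA
variable {G : Type*} [Group G]
open scoped Classical Pointwise
open Filter Topology

section GroupTheory

lemma finiteIndex_mono {K K' : Subgroup G} (h : K ≤ K') (hf : K.FiniteIndex) :
    K'.FiniteIndex := by
  constructor
  intro h0
  have hd := Subgroup.index_dvd_of_le h
  rw [h0] at hd
  exact hf.index_ne_zero (zero_dvd_iff.mp hd)

lemma centralizer_one : Subgroup.centralizer ({(1:G)} : Set G) = ⊤ := by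
  ext z
  simp [Subgroup.mem_centralizer_iff]

lemma centralizer_finiteIndex_of_mem_closure {V : Set G}
    (hV : ∀ x ∈ V, (Subgroup.centralizer {x}).FiniteIndex) :
    ∀ h ∈ Subgroup.closure V, (Subgroup.centralizer ({h} : Set G)).FiniteIndex := by
  intro h hmem
  refine Subgroup.closure_induction (p := fun g _ => (Subgroup.centralizer ({g} : Set G)).FiniteIndex)
    ?_ ?_ ?_ ?_ hmem
  · exact hV
  · show (Subgroup.centralizer ({(1:G)} : Set G)).FiniteIndex
    rw [centralizer_one]
    infer_instance
  · intro a b _ _ ha hb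
    refine finiteIndex_mono (K := Subgroup.centralizer {a} ⊓ Subgroup.centralizer {b}) ?_ ?_
    · intro z hz
      rw [Subgroup.mem_inf] at hz
      rw [Subgroup.mem_centralizer_iff]
      intro g hg
      rw [Set.mem_singleton_iff] at hg
      rw [hg]
      have h1 : a * z = z * a :=
        Subgroup.mem_centralizer_iff.mp hz.1 a (Set.mem_singleton a)
      have h2 : b * z = z * b :=
        Subgroup.mem_centralizer_iff.mp hz.2 b (Set.mem_singleton b)
      calc (a*b)*z = a*(b*z) := by rw [mul_assoc]
        _ = a*(z*b) := by rw [h2]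
        _ = (a*z)*b := by rw [mul_assoc]
        _ = (z*a)*b := by rw [h1]
        _ = z*(a*b) := by rw [mul_assoc]
    · haveI := ha; haveI := hb
      infer_instance
  · intro a _ ha
    refine finiteIndex_mono ?_ ha
    intro z hz
    rw [Subgroup.mem_centralizer_iff] at hz ⊢
    intro g hg
    rw [Set.mem_singleton_iff] at hg
    rw [hg]
    exact Commute.inv_left (hz a (Set.mem_singleton a))

end GroupTheory
end VA

open VA Filter Topology in
theorem virtually_abelian_of_liminf_prob_involution' {G : Type*} [Group G]
    (hFG : Group.FG G) (μ : G →₀ ℝ)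
    (hpos : ∀ g : G, 0 ≤ μ g) (hsym : ∀ g : G, μ g⁻¹ = μ g)
    (htotal : μ.sum (fun _ c => c) = 1)
    (hgen : Subgroup.closure (μ.support : Set G) = ⊤)
    (hid : (1 : G) ∈ μ.support)
    (hliminf : (Real.sqrt 5 - 1) / 2 <
      Filter.liminf (fun n => measOf (convPow μ n) {g : G | g ^ 2 = 1}) Filter.atTop) :
    ∃ K : Subgroup G, K.FiniteIndex ∧ ∀ x ∈ K, ∀ y ∈ K, x * y = y * x := by
  classical
  have htotal' : mass μ = 1 := htotal
  have hnn : ∀ n, 0 ≤ measOf (convPow μ n) {g : G | g ^ 2 = 1} := fun n =>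
    measOf_nonneg (convPow_nonneg hpos n) _
  set φ : ℝ := (Real.sqrt 5 - 1)/2 with hφdef
  set lim := Filter.liminf (fun n => measOf (convPow μ n) {g : G | g ^ 2 = 1}) Filter.atTop
    with hlimdef
  have hlt : φ < lim := hliminf
  set α := (φ + lim)/2 with hαdef
  have hmid1 : φ < α := by rw [hαdef]; linarith
  have hmid2 : α < lim := by rw [hαdef]; linarith
  have hbound : IsBoundedUnder (· ≥ ·) atTop
      (fun n => measOf (convPow μ n) {g : G | g ^ 2 = 1}) :=
    isBoundedUnder_of ⟨0, fun n => hnn n⟩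
  have hev : ∀ᶠ n in atTop, α < measOf (convPow μ n) {g : G | g ^ 2 = 1} :=
    eventually_lt_of_lt_liminf hmid2 hbound
  obtain ⟨N, hN⟩ := eventually_atTop.mp hev
  have hNα : ∀ n, N ≤ n → α ≤ measOf (convPow μ n) (ISet G) := fun n hn =>
    le_of_lt (hN n hn)
  have h5 : Real.sqrt 5 ^ 2 = 5 := Real.sq_sqrt (by norm_num)
  have hsq5pos : 0 < Real.sqrt 5 := Real.sqrt_pos.mpr (by norm_num)
  have h2lt : 2 < Real.sqrt 5 := by nlinarith [h5, hsq5pos]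
  have hφpos : 0 < φ := by rw [hφdef]; linarith
  have hφeq : φ*φ + φ - 1 = 0 := by
    rw [hφdef]
    nlinarith [h5]
  have hα0 : 0 ≤ α := by linarith
  have hεpos : 0 < α*α + α - 1 := by nlinarith
  set ε := α*α + α - 1 with hεdef
  -- the set of elements with heavy centralizers
  set V := Vset μ (ε/2) with hVdef
  have hVmeas : ∀ k, N ≤ k → ε/2 ≤ measOf (convPow μ (2*k)) V := fun k hk =>
    measOf_Vset hpos hsym htotal' hα0 (le_of_lt hεpos) hNα hk
  have hVcent : ∀ x ∈ V, (Subgroup.centralizer ({x} : Set G)).FiniteIndex := by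
    intro x hx
    exact finiteIndex_of_measOf_lower hpos hsym htotal' hgen hid (half_pos hεpos) hx
  -- the subgroup generated by V
  set HH := Subgroup.closure V with hHHdef
  have hHmeas : ∀ k, ε/2 ≤ measOf (convPow μ (2*k)) (HH : Set G) := by
    intro k
    have hanti := measOf_even_antitone hpos hsym htotal' HH
    have hmono : ∀ j, measOf (convPow μ (2*j)) V ≤ measOf (convPow μ (2*j)) (HH : Set G) :=
      fun j => measOf_mono (convPow_nonneg hpos _) Subgroup.subset_closure
    by_cases hk : N ≤ k
    · exact le_trans (hVmeas k hk) (hmono k)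
    · push_neg at hk
      exact le_trans (le_trans (hVmeas N (le_refl N)) (hmono N)) (hanti (le_of_lt hk))
  haveI hHfi : HH.FiniteIndex :=
    finiteIndex_of_measOf_lower hpos hsym htotal' hgen hid (half_pos hεpos) hHmeas
  haveI := hFG
  haveI hHfg' : Group.FG ↥HH := Subgroup.fg_of_index_ne_zero HH
  have hHfg : HH.FG := (Group.fg_iff_subgroup_fg HH).mp hHfg'
  obtain ⟨S, hScl, hSfin⟩ := (Subgroup.fg_iff HH).mp hHfg
  have hcent : ∀ h ∈ HH, (Subgroup.centralizer ({h} : Set G)).FiniteIndex :=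
    centralizer_finiteIndex_of_mem_closure hVcent
  haveI : Finite ↥S := hSfin.to_subtype
  set K0 := ⨅ (t : S), Subgroup.centralizer ({(t : G)} : Set G) with hK0def
  haveI hK0fi : K0.FiniteIndex := by
    refine Subgroup.finiteIndex_iInf fun t => ?_
    refine hcent t ?_
    rw [← hScl]
    exact Subgroup.subset_closure t.2
  refine ⟨K0 ⊓ HH, inferInstance, ?_⟩
  intro x hx y hy
  have hx0 : x ∈ K0 := (Subgroup.mem_inf.mp hx).1
  have hyH : y ∈ HH := (Subgroup.mem_inf.mp hy).2
  rw [← hScl] at hyH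
  refine Subgroup.closure_induction (p := fun yy _ => x * yy = yy * x) ?_ ?_ ?_ ?_ hyH
  · intro s hs
    have hmem : x ∈ Subgroup.centralizer ({s} : Set G) := by
      have := Subgroup.mem_iInf.mp hx0 ⟨s, hs⟩
      exact this
    exact (Subgroup.mem_centralizer_iff.mp hmem s (Set.mem_singleton s)).symm
  · show x * 1 = 1 * x
    rw [mul_one, one_mul]
  · intro a b _ _ ha hb
    calc x*(a*b) = (x*a)*b := by rw [mul_assoc]
      _ = (a*x)*b := by rw [ha]
      _ = a*(x*b) := by rw [mul_assoc]
      _ = a*(b*x) := by rw [hb]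
      _ = (a*b)*x := by rw [mul_assoc]
  · intro a _ ha
    exact Commute.inv_right ha

/-- **Lemma (probability of involutions).** Let `G` be a finitely generated group and
`μ` a symmetric probability measure with finite generating support containing the
identity. If `liminf_n μ^{*n}({g : g² = 1}) > (√5 − 1)/2`, then `G` is virtually
abelian. -/
theorem virtually_abelian_of_liminf_prob_involution {G : Type*} [Group G]
    (hFG : Group.FG G) (μ : G →₀ ℝ)
    (hpos : ∀ g : G, 0 ≤ μ g) (hsym : ∀ g : G, μ g⁻¹ = μ g)
    (htotal : μ.sum (fun _ c => c) = 1)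
    (hgen : Subgroup.closure (μ.support : Set G) = ⊤)
    (hid : (1 : G) ∈ μ.support)
    (hliminf : (Real.sqrt 5 - 1) / 2 <
      Filter.liminf (fun n => measOf (convPow μ n) {g : G | g ^ 2 = 1}) Filter.atTop) :
    ∃ K : Subgroup G, K.FiniteIndex ∧ ∀ x ∈ K, ∀ y ∈ K, x * y = y * x :=
  virtually_abelian_of_liminf_prob_involution' hFG μ hpos hsym htotal hgen hid hliminf
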